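/- The number of permutations π ∈ Sₙ with pexc(π) = k and π(1) ≠ 1 equals Σ over i with max(n−k−2,0) ≤ i ≤ ⌊(2n−k−2)/2⌋ of C(n−1, i)·d(n−i, k−n+i+2), where d(m, r) is the number of derangements of m elements with r cycles. -/

import Mathlib

open Equiv Finset Filter
open scoped Classical

noncomputable section

/-- Number of fixed points of a permutation. -/
def c1 {n : ℕ} (π : Equiv.Perm (Fin n)) : ℕ :=
  (Finset.univ.filter fun i => π i = i).card

/-- Number of cycles of length at least 2 of a permutation. -/
def c2 {n : ℕ} (π : Equiv.Perm (Fin n)) : ℕ := π.cycleType.card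

/-- The prefix exchange distance, given by the Akers–Krishnamurthy formula. -/
def pexc {n : ℕ} (π : Equiv.Perm (Fin n)) : ℕ :=
  n + c2 π - c1 π - (if ∀ i : Fin n, (i : ℕ) = 0 → π i = i then 0 else 2)

/-- Whitney numbers of the second kind for the star poset. -/
def W (n k : ℕ) : ℕ :=
  (Finset.univ.filter fun π : Equiv.Perm (Fin n) => pexc π = k).card

/-- Total number of cycles of a permutation (fixed points count as 1-cycles). -/
def numCycles {n : ℕ} (π : Equiv.Perm (Fin n)) : ℕ := c2 π + c1 π

/-- Number of derangements of `m` elements with `r` cycles. -/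
def dnum (m r : ℕ) : ℕ :=
  (Finset.univ.filter fun π : Equiv.Perm (Fin m) =>
    (∀ i, π i ≠ i) ∧ numCycles π = r).card

/-- The fixed-point set of a permutation, as a finset. -/
def fixedSet {n : ℕ} (π : Equiv.Perm (Fin n)) : Finset (Fin n) :=
  Finset.univ.filter fun i => π i = i

lemma fixedSet_eq_compl_support {n : ℕ} (π : Equiv.Perm (Fin n)) :
    fixedSet π = π.supportᶜ := by
  ext x
  simp [fixedSet, Equiv.Perm.mem_support]

lemma c1_eq {n : ℕ} (π : Equiv.Perm (Fin n)) : c1 π = n - π.support.card := by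
  have : c1 π = (fixedSet π).card := rfl
  rw [this, fixedSet_eq_compl_support, Finset.card_compl, Fintype.card_fin]

lemma support_card_le {n : ℕ} (π : Equiv.Perm (Fin n)) : π.support.card ≤ n := by
  simpa using Finset.card_le_univ π.support

lemma two_mul_c2_le {n : ℕ} (π : Equiv.Perm (Fin n)) :
    2 * c2 π ≤ π.support.card := by
  have h := Multiset.card_nsmul_le_sum (fun x hx =>
    Equiv.Perm.two_le_of_mem_cycleType (σ := π) hx)
  rw [Equiv.Perm.sum_cycleType] at h
  rw [c2]
  simpa [smul_eq_mul, mul_comm] using h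

lemma c2_pos {n : ℕ} {π : Equiv.Perm (Fin n)} {x : Fin n} (h : π x ≠ x) :
    1 ≤ c2 π := by
  have : π ≠ 1 := fun h1 => h (by simp [h1])
  exact (Equiv.Perm.card_cycleType_pos.mpr this : 0 < π.cycleType.card)

lemma pexc_of_ne {n : ℕ} (hn : 0 < n) (π : Equiv.Perm (Fin n))
    (h : π ⟨0, hn⟩ ≠ ⟨0, hn⟩) : pexc π = n + c2 π - c1 π - 2 := by
  unfold pexc
  rw [if_neg]
  push_neg
  exact ⟨⟨0, hn⟩, rfl, h⟩

/-- Key bijection: permutations with prescribed fixed-point set `s` and `c`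
cycles correspond to derangements of the complement with `c` cycles. -/
lemma card_fixedSet_c2 {n : ℕ} (s : Finset (Fin n)) (c : ℕ) :
    (Finset.univ.filter fun π : Equiv.Perm (Fin n) =>
        fixedSet π = s ∧ c2 π = c).card = dnum (n - s.card) c := by
  classical
  have hm : Fintype.card {x : Fin n // x ∉ s} = n - s.card := by
    simpa using Fintype.card_subtype_compl (fun x : Fin n => x ∈ s)
  let e : Fin (n - s.card) ≃ {x : Fin n // x ∉ s} :=
    Fintype.equivOfCardEq (by simp [hm])
  rw [dnum]
  refine (Finset.card_bij (fun σ _ => σ.extendDomain e) ?_ ?_ ?_).symm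
  · -- maps into the target
    rintro σ hσ
    simp only [Finset.mem_filter, Finset.mem_univ, true_and] at hσ
    obtain ⟨hder, hnc⟩ := hσ
    have hc1 : c1 σ = 0 := by
      rw [c1, Finset.card_eq_zero, Finset.filter_eq_empty_iff]
      intro j _
      exact hder j
    have hc2σ : c2 σ = c := by
      rw [numCycles, hc1, add_zero] at hnc; exact hnc
    simp only [Finset.mem_filter, Finset.mem_univ, true_and]
    constructor
    · ext x
      simp only [fixedSet, Finset.mem_filter, Finset.mem_univ, true_and]
      by_cases hx : x ∈ s
      · simp only [hx, iff_true]
        exact Equiv.Perm.extendDomain_apply_not_subtype σ e (by simp [hx])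
      · simp only [hx, iff_false]
        rw [Equiv.Perm.extendDomain_apply_subtype σ e (show x ∉ s from hx)]
        intro hcontra
        have hx2 : e (e.symm ⟨x, hx⟩) = (⟨x, hx⟩ : {x : Fin n // x ∉ s}) :=
          e.apply_symm_apply _
        have : e (σ (e.symm ⟨x, hx⟩)) = e (e.symm ⟨x, hx⟩) := by
          rw [hx2]; exact Subtype.ext hcontra
        exact hder _ (e.injective this)
    · rw [c2, Equiv.Perm.cycleType_extendDomain, ← c2, hc2σ]
  · -- injective
    intro σ₁ _ σ₂ _ h
    ext j
    have := congrArg (fun π : Equiv.Perm (Fin n) => π (e j : Fin n)) h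
    simp only [Equiv.Perm.extendDomain_apply_image] at this
    exact congrArg Fin.val (e.injective (Subtype.ext this))
  · -- surjective
    intro π hπ
    simp only [Finset.mem_filter, Finset.mem_univ, true_and] at hπ
    obtain ⟨hfix, hc2⟩ := hπ
    have h1 : ∀ y : Fin n, y ∈ s ↔ π y = y := by
      intro y
      rw [← hfix]
      simp [fixedSet]
    have hmem : ∀ x : Fin n, x ∉ s ↔ π x ∉ s := by
      intro x
      constructor
      · intro hx hpx
        have h2 : π (π x) = π x := (h1 _).1 hpx
        have h3 : π x = x := π.injective h2
        exact hx ((h1 x).2 h3)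
      · intro hpx hx
        have h3 : π x = x := (h1 x).1 hx
        exact hpx (show π x ∈ s by rw [h3]; exact hx)
    set τ : Equiv.Perm {x : Fin n // x ∉ s} := π.subtypePerm (fun x => (hmem x).symm) with hτ
    set σ : Equiv.Perm (Fin (n - s.card)) := e.symm.permCongr τ with hσ
    have hext : σ.extendDomain e = π := by
      ext x
      by_cases hx : x ∈ s
      · rw [Equiv.Perm.extendDomain_apply_not_subtype σ e (by simp [hx])]
        exact congrArg Fin.val ((h1 x).1 hx).symm
      · rw [Equiv.Perm.extendDomain_apply_subtype σ e (show x ∉ s from hx)]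
        simp [hσ, hτ, Equiv.permCongr_apply, Equiv.Perm.subtypePerm_apply]
    have hder : ∀ j, σ j ≠ j := by
      intro j hj
      have : τ (e j) = e j := by
        have := congrArg e hj
        simpa [hσ, Equiv.permCongr_apply] using this
      have hfixj : π (e j : Fin n) = (e j : Fin n) := congrArg Subtype.val this
      exact (e j).2 ((h1 _).2 hfixj)
    have hc1σ : c1 σ = 0 := by
      rw [c1, Finset.card_eq_zero, Finset.filter_eq_empty_iff]
      intro j _
      exact hder j
    have hc2σ : c2 σ = c := by
      have : c2 (σ.extendDomain e) = c2 σ := by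
        rw [c2, c2, Equiv.Perm.cycleType_extendDomain]
      rw [← this, hext, hc2]
    refine ⟨σ, ?_, hext⟩
    simp only [Finset.mem_filter, Finset.mem_univ, true_and]
    exact ⟨hder, by rw [numCycles, hc1σ, hc2σ, add_zero]⟩

theorem stmt14 (n k : ℕ) (hn : 0 < n) :
    (Finset.univ.filter fun π : Equiv.Perm (Fin n) =>
        pexc π = k ∧ π ⟨0, hn⟩ ≠ ⟨0, hn⟩).card =
      ∑ i ∈ Finset.Icc (n - k - 2) ((2 * n - k - 2) / 2),
        (n - 1).choose i * dnum (n - i) (k + i + 2 - n) := by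
  classical
  set z : Fin n := ⟨0, hn⟩ with hz
  -- basic facts about any π in the LHS set
  have facts : ∀ π : Equiv.Perm (Fin n), π z ≠ z →
      c1 π = n - π.support.card ∧ π.support.card ≤ n ∧
      2 * c2 π ≤ π.support.card ∧ 1 ≤ c2 π ∧
      pexc π = n + c2 π - c1 π - 2 := fun π h =>
    ⟨c1_eq π, support_card_le π, two_mul_c2_le π, c2_pos h, pexc_of_ne hn π h⟩
  rw [Finset.card_eq_sum_card_fiberwise
    (f := fun π : Equiv.Perm (Fin n) => c1 π)
    (t := Finset.Icc (n - k - 2) ((2 * n - k - 2) / 2)) ?_]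
  swap
  · intro π hπ
    simp only [Finset.mem_coe, Finset.mem_filter, Finset.mem_univ, true_and] at hπ
    obtain ⟨hpexc, hne⟩ := hπ
    obtain ⟨h1, h2, h3, h4, h5⟩ := facts π hne
    rw [h5] at hpexc
    show c1 π ∈ Finset.Icc (n - k - 2) ((2 * n - k - 2) / 2)
    rw [Finset.mem_Icc]
    omega
  refine Finset.sum_congr rfl fun i hi => ?_
  rw [Finset.mem_Icc] at hi
  rw [Finset.filter_filter]
  -- the fiber over i: group by the fixed-point set
  have hpred : ∀ π : Equiv.Perm (Fin n),
      ((pexc π = k ∧ π z ≠ z) ∧ c1 π = i) ↔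
      (π z ≠ z ∧ c1 π = i ∧ c2 π = k + i + 2 - n) := by
    intro π
    constructor
    · rintro ⟨⟨hpexc, hne⟩, hc1⟩
      obtain ⟨h1, h2, h3, h4, h5⟩ := facts π hne
      rw [h5] at hpexc
      exact ⟨hne, hc1, by omega⟩
    · rintro ⟨hne, hc1, hc2⟩
      obtain ⟨h1, h2, h3, h4, h5⟩ := facts π hne
      refine ⟨⟨?_, hne⟩, hc1⟩
      rw [h5]
      omega
  rw [Finset.filter_congr (fun π _ => hpred π)]
  -- group by the fixed-point set
  rw [Finset.card_eq_sum_card_fiberwise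
    (f := fun π : Equiv.Perm (Fin n) => fixedSet π)
    (t := (Finset.univ.erase z).powersetCard i) ?_]
  swap
  · intro π hπ
    simp only [Finset.mem_coe, Finset.mem_filter, Finset.mem_univ, true_and] at hπ
    obtain ⟨hne, hc1, _⟩ := hπ
    show fixedSet π ∈ (Finset.univ.erase z).powersetCard i
    rw [Finset.mem_powersetCard]
    constructor
    · intro x hx
      simp only [fixedSet, Finset.mem_filter, Finset.mem_univ, true_and] at hx
      rw [Finset.mem_erase]
      refine ⟨?_, Finset.mem_univ x⟩
      rintro rfl
      exact hne hx
    · exact hc1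
  have hfib : ∀ s ∈ (Finset.univ.erase z).powersetCard i,
      ((Finset.univ.filter fun π : Equiv.Perm (Fin n) =>
          π z ≠ z ∧ c1 π = i ∧ c2 π = k + i + 2 - n).filter
        fun π => fixedSet π = s).card = dnum (n - i) (k + i + 2 - n) := by
    intro s hs
    rw [Finset.mem_powersetCard] at hs
    obtain ⟨hsub, hcard⟩ := hs
    have hzs : z ∉ s := fun h => (Finset.mem_erase.mp (hsub h)).1 rfl
    rw [Finset.filter_filter]
    have : ∀ π : Equiv.Perm (Fin n),
        ((π z ≠ z ∧ c1 π = i ∧ c2 π = k + i + 2 - n) ∧ fixedSet π = s) ↔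
        (fixedSet π = s ∧ c2 π = k + i + 2 - n) := by
      intro π
      constructor
      · rintro ⟨⟨_, _, hc2⟩, hfx⟩
        exact ⟨hfx, hc2⟩
      · rintro ⟨hfx, hc2⟩
        have hc1 : c1 π = i := by rw [c1, ← fixedSet, hfx, hcard]
        have hne : π z ≠ z := by
          intro h
          apply hzs
          rw [← hfx]
          simp [fixedSet, h]
        exact ⟨⟨hne, hc1, hc2⟩, hfx⟩
    rw [Finset.filter_congr (fun π _ => this π)]
    rw [card_fixedSet_c2 s (k + i + 2 - n), hcard]
  rw [Finset.sum_congr rfl hfib, Finset.sum_const, Finset.card_powersetCard,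
    smul_eq_mul]
  congr 1
  rw [Finset.card_erase_of_mem (Finset.mem_univ z), Finset.card_univ,
    Fintype.card_fin]
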